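/- arXiv:1701.03407 — 4 statements merged into one kernel-verified Lean document; each statement's English description precedes it below -/
import Mathlib

section
/- For every closed arc J strictly contained in the unit circle and every δ > 0, there exists a polynomial P with complex coefficients such that P(0) = 1 and |P(t)| < δ for all t in J. -/
open Polynomial Complex

lemma cheb_aux : ∀ n : ℕ, (Chebyshev.T ℝ n).natDegree ≤ n ∧
    (Chebyshev.T ℝ n).coeff n = 2 ^ (n - 1) := by
  intro n
  induction n using Nat.strong_induction_on with
  | _ n ih =>
    match n with
    | 0 => simp [Chebyshev.T_zero]
    | 1 => simp [Chebyshev.T_one]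
    | (k+2) =>
      obtain ⟨h1, h2⟩ := ih (k+1) (by omega)
      obtain ⟨h1', _⟩ := ih k (by omega)
      have hT : Chebyshev.T ℝ ((k:ℤ)+2)
          = 2 * X * Chebyshev.T ℝ ((k:ℤ)+1) - Chebyshev.T ℝ (k:ℤ) :=
        Chebyshev.T_add_two ℝ k
      have hcast : ((k+2 : ℕ) : ℤ) = (k:ℤ)+2 := by push_cast; ring
      have hcast1 : ((k+1 : ℕ) : ℤ) = (k:ℤ)+1 := by push_cast; ring
      rw [hcast, hT]
      have h2X : (2 * X : Polynomial ℝ) = C 2 * X := by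
        rw [(map_ofNat C 2).symm]
      constructor
      · refine (natDegree_sub_le _ _).trans (max_le ?_ (h1'.trans (by omega)))
        refine (natDegree_mul_le).trans ?_
        have : (2 * X : Polynomial ℝ).natDegree ≤ 1 := by
          rw [h2X]; exact natDegree_C_mul_le _ _ |>.trans natDegree_X_le
        rw [hcast1] at h1
        omega
      · rw [coeff_sub, h2X, mul_assoc, coeff_C_mul, coeff_X_mul,
          coeff_eq_zero_of_natDegree_lt (lt_of_le_of_lt h1' (by omega))]
        rw [hcast1] at h2
        rw [h2]
        show 2 * 2 ^ k - 0 = 2 ^ (k + 1)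
        rw [pow_succ]
        ring

lemma cheb_le_one (n : ℤ) {y : ℝ} (h1 : -1 ≤ y) (h2 : y ≤ 1) :
    |(Chebyshev.T ℝ n).eval y| ≤ 1 := by
  have h := Polynomial.Chebyshev.T_real_cos (Real.arccos y) n
  rw [Real.cos_arccos h1 h2] at h
  rw [h]
  exact Real.abs_cos_le_one _

lemma key (n : ℕ) (p : Polynomial ℝ) (hdeg : p.natDegree < n + 1) (μ : ℝ) :
    ∃ Q : Polynomial ℂ, Q.eval 0 = ((p.coeff n / 2 ^ n : ℝ) : ℂ) ∧
      ∀ θ : ℝ, ‖Q.eval (Complex.exp ((θ:ℂ) * Complex.I))‖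
        = |p.eval (Real.cos (θ - μ))| := by
  set e : ℂ := Complex.exp (-(μ:ℂ) * Complex.I) with he
  refine ⟨∑ k ∈ Finset.range (n+1), Polynomial.C ((p.coeff k / 2 ^ k : ℝ) : ℂ) *
      ((Polynomial.C e * Polynomial.X) ^ (n - k)
        * ((Polynomial.C e * Polynomial.X) ^ 2 + 1) ^ k), ?_, ?_⟩
  · rw [Polynomial.eval_finset_sum]
    rw [Finset.sum_eq_single n]
    · simp
    · intro k hk hkn
      have hnk : n - k ≠ 0 := by simp only [Finset.mem_range] at hk; omega
      simp [zero_pow hnk]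
    · simp
  · intro θ
    set ψ := θ - μ with hψ
    have hw : e * Complex.exp ((θ:ℂ) * Complex.I) = Complex.exp ((ψ:ℂ) * Complex.I) := by
      rw [← Complex.exp_add]; congr 1; simp only [hψ]; push_cast; ring
    set w : ℂ := Complex.exp ((ψ:ℂ) * Complex.I) with hwdef
    have hne : w ≠ 0 := Complex.exp_ne_zero _
    have hinv : Complex.exp (-((ψ:ℂ) * Complex.I)) = w⁻¹ := by
      rw [hwdef, Complex.exp_neg]
    have hsum : w + w⁻¹ = ((2 * Real.cos ψ : ℝ) : ℂ) := by
      rw [← hinv, hwdef, show -((ψ:ℂ)*Complex.I) = ((-ψ:ℝ):ℂ) * Complex.I by push_cast; ring,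
        Complex.exp_mul_I, Complex.exp_mul_I]
      push_cast
      simp only [Complex.cos_neg, Complex.sin_neg, ← Complex.ofReal_cos]
      push_cast
      ring
    have hw2 : w ^ 2 + 1 = ((2 * Real.cos ψ : ℝ) : ℂ) * w := by
      rw [← hsum]
      field_simp
    rw [Polynomial.eval_finset_sum]
    have hterm : ∀ k ∈ Finset.range (n+1),
        (Polynomial.C ((p.coeff k / 2 ^ k : ℝ) : ℂ) *
          ((Polynomial.C e * Polynomial.X) ^ (n - k)
            * ((Polynomial.C e * Polynomial.X) ^ 2 + 1) ^ k)).eval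
              (Complex.exp ((θ:ℂ) * Complex.I))
        = w ^ n * (((p.coeff k : ℝ) : ℂ) * ((Real.cos ψ : ℝ) : ℂ) ^ k) := by
      intro k hk
      simp only [Finset.mem_range] at hk
      have hkn : k ≤ n := by omega
      simp only [Polynomial.eval_mul, Polynomial.eval_pow, Polynomial.eval_add,
        Polynomial.eval_one, Polynomial.eval_C, Polynomial.eval_X]
      rw [hw, hw2, pow_sub₀ _ hne hkn]
      push_cast
      field_simp
      ring
    rw [Finset.sum_congr rfl hterm, ← Finset.mul_sum]
    have hps : ∑ k ∈ Finset.range (n+1), (((p.coeff k : ℝ) : ℂ) * ((Real.cos ψ : ℝ) : ℂ) ^ k)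
        = ((p.eval (Real.cos ψ) : ℝ) : ℂ) := by
      rw [Polynomial.eval_eq_sum_range' hdeg]
      push_cast
      ring
    rw [hps, norm_mul, norm_pow]
    rw [Complex.norm_exp_ofReal_mul_I, Complex.norm_real, Real.norm_eq_abs, one_pow, one_mul]

/-- For every closed arc `J ⊊ 𝕋` (parametrized as the image of
`θ ↦ exp(iθ)` over `[a,b]` with `b - a < 2π`) and every `δ > 0`, there is a
polynomial `P ∈ ℂ[X]` with `P(0) = 1` and `|P(t)| < δ` for all `t ∈ J`. -/
theorem stmt0 (a b : ℝ) (hab : a ≤ b) (hlen : b - a < 2 * Real.pi)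
    (δ : ℝ) (hδ : 0 < δ) :
    ∃ P : Polynomial ℂ, P.eval 0 = 1 ∧
      ∀ t ∈ (fun θ : ℝ => Complex.exp ((θ : ℂ) * Complex.I)) '' Set.Icc a b,
        ‖P.eval t‖ < δ := by
  have hπ := Real.pi_pos
  set L : ℝ := (b - a) / 2 with hLdef
  have hL0 : 0 ≤ L := by simp only [hLdef]; linarith
  have hLπ : L < Real.pi := by simp only [hLdef]; linarith
  set β : ℝ := max (-Real.cos L) (-(1/2)) with hβdef
  have hβ1 : β < 1 := by
    apply max_lt
    · have := Real.cos_lt_cos_of_nonneg_of_le_pi hL0 le_rfl hLπ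
      rw [Real.cos_pi] at this
      linarith
    · linarith
  have hβhalf : -(1/2) ≤ β := le_max_right _ _
  have h1β : 0 < 1 + β := by linarith
  set r : ℝ := (1 + β) / 2 with hrdef
  have hr0 : 0 < r := by simp only [hrdef]; linarith
  have hr1 : r < 1 := by simp only [hrdef]; linarith
  obtain ⟨m, hm⟩ := exists_pow_lt_of_lt_one (half_pos hδ) hr1
  set n : ℕ := m + 1 with hndef
  have hrn : 2 * r ^ n < δ := by
    have h1 : r ^ n ≤ r ^ m := pow_le_pow_of_le_one hr0.le hr1.le (Nat.le_succ m)
    linarith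
  set u : ℝ := 2 / (1 + β) with hudef
  have hu0 : 0 < u := by positivity
  set v : ℝ := (1 - β) / (1 + β) with hvdef
  set p : Polynomial ℝ :=
    (Polynomial.Chebyshev.T ℝ n).comp (Polynomial.C u * Polynomial.X + Polynomial.C v) with hpdef
  obtain ⟨hTdeg, hTcoeff⟩ := cheb_aux n
  have hTdeg' : (Polynomial.Chebyshev.T ℝ (n:ℤ)).natDegree = n := by
    refine le_antisymm hTdeg (Polynomial.le_natDegree_of_ne_zero ?_)
    rw [hTcoeff]; positivity
  have hqdeg : (Polynomial.C u * Polynomial.X + Polynomial.C v).natDegree = 1 :=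
    Polynomial.natDegree_linear hu0.ne'
  have hpdegn : p.natDegree = n := by
    rw [hpdef, Polynomial.natDegree_comp, hTdeg', hqdeg, mul_one]
  have hplc : p.coeff n = 2 ^ (n - 1) * u ^ n := by
    have hlc := Polynomial.leadingCoeff_comp
      (p := Polynomial.Chebyshev.T ℝ n) (q := Polynomial.C u * Polynomial.X + Polynomial.C v)
      (by rw [hqdeg]; exact one_ne_zero)
    rw [Polynomial.leadingCoeff_linear hu0.ne', hTdeg'] at hlc
    have : p.coeff n = p.leadingCoeff := by
      rw [Polynomial.leadingCoeff, hpdegn]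
    rw [this, hpdef, hlc, Polynomial.leadingCoeff, hTdeg', hTcoeff]
  have hA : 0 < p.coeff n := by rw [hplc]; positivity
  have hbound : ∀ x ∈ Set.Icc (-1 : ℝ) β, |p.eval x| ≤ 1 := by
    intro x hx
    rw [hpdef, Polynomial.eval_comp]
    simp only [Polynomial.eval_add, Polynomial.eval_mul, Polynomial.eval_C, Polynomial.eval_X]
    have hux : u * x + v = (2 * x + 1 - β) / (1 + β) := by
      rw [hudef, hvdef]; field_simp; ring
    apply cheb_le_one
    · rw [hux, le_div_iff₀ h1β]
      have := hx.1
      linarith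
    · rw [hux, div_le_one h1β]
      have := hx.2
      linarith
  set μ : ℝ := (a + b) / 2 + Real.pi with hμdef
  obtain ⟨Q, hQ0, hQe⟩ := key n p (by rw [hpdegn]; omega) μ
  refine ⟨Polynomial.C (((2:ℝ) ^ n / p.coeff n : ℝ) : ℂ) * Q, ?_, ?_⟩
  · rw [Polynomial.eval_mul, Polynomial.eval_C, hQ0, ← Complex.ofReal_mul]
    rw [show (2:ℝ) ^ n / p.coeff n * (p.coeff n / 2 ^ n) = 1 by
      field_simp]
    norm_num
  · rintro t ⟨θ, hθ, rfl⟩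
    rw [Polynomial.eval_mul, Polynomial.eval_C, norm_mul, hQe θ]
    have hcosle : Real.cos (θ - μ) ≤ β := by
      have h1 : θ - μ = (θ - (a + b) / 2) - Real.pi := by rw [hμdef]; ring
      rw [h1, Real.cos_sub_pi]
      have habs : |θ - (a + b) / 2| ≤ L := by
        rw [abs_le, hLdef]
        obtain ⟨h2, h3⟩ := hθ
        constructor <;> linarith
      have h4 : Real.cos L ≤ Real.cos (θ - (a + b) / 2) := by
        rw [← Real.cos_abs (θ - (a + b) / 2)]
        exact Real.cos_le_cos_of_nonneg_of_le_pi (abs_nonneg _) hLπ.le habs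
      have h5 : -Real.cos (θ - (a + b) / 2) ≤ -Real.cos L := by linarith
      exact h5.trans (le_max_left _ _)
    have hxmem : Real.cos (θ - μ) ∈ Set.Icc (-1 : ℝ) β :=
      ⟨Real.neg_one_le_cos _, hcosle⟩
    have hb1 : |p.eval (Real.cos (θ - μ))| ≤ 1 := hbound _ hxmem
    have hcoefnorm : ‖(((2:ℝ) ^ n / p.coeff n : ℝ) : ℂ)‖ = (2:ℝ) ^ n / p.coeff n := by
      rw [Complex.norm_real, Real.norm_eq_abs, abs_of_pos (by positivity)]
    rw [hcoefnorm]
    have hcalc : (2:ℝ) ^ n / p.coeff n = 2 * r ^ n := by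
      rw [hplc, show n - 1 = m from rfl, hndef, hrdef, hudef]
      rw [div_pow, pow_succ, pow_succ]
      field_simp
      have e : ((1:ℝ) / 2 + β * (1 / 2)) ^ m * 2 ^ m = (1 + β) ^ m := by
        rw [← mul_pow]; congr 1; ring
      linear_combination (-(β + 1)) * e
    calc (2:ℝ) ^ n / p.coeff n * |p.eval (Real.cos (θ - μ))|
        ≤ (2:ℝ) ^ n / p.coeff n * 1 := by
          apply mul_le_mul_of_nonneg_left hb1 (by positivity)
      _ = 2 * r ^ n := by rw [mul_one, hcalc]
      _ < δ := hrn
end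

section
/- Let ρ be a finite positive Borel measure on the unit circle whose closed support is not all of 𝕋. Then there exist constants C > 0 and c > 0 such that for all n ≥ 1, the distance in L²(ρ) from the constant function 1 to the set of polynomials of degree at most n vanishing at 0 is at most C·e^{-cn}. -/
open MeasureTheory

/-- `eN ρ n` : the distance in `L²(ρ)` from the constant `1` to the set of
polynomials of degree at most `n` vanishing at `0`. -/
noncomputable def eN (ρ : Measure ℂ) (n : ℕ) : ℝ :=
  sInf {r : ℝ | ∃ Q : Polynomial ℂ, Q.natDegree ≤ n ∧ Q.eval 0 = 0 ∧
    r = (∫ z, ‖(1 : ℂ) - Q.eval z‖ ^ 2 ∂ρ) ^ (1 / 2 : ℝ)}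

open Polynomial

noncomputable def Spoly (m : ℝ) : ℕ → Polynomial ℂ
  | 0 => C ((m : ℂ) + 1)⁻¹ * (X ^ 2 - C ((m : ℂ) - 1) * X + 1)
  | (k+1) => C 2 * (Spoly m k) ^ 2 - X ^ (2 ^ (k+1))

lemma Spoly_natDegree_le (m : ℝ) (k : ℕ) : (Spoly m k).natDegree ≤ 2 ^ (k+1) := by
  induction k with
  | zero => unfold Spoly; compute_degree!
  | succ k ih =>
    unfold Spoly
    refine (natDegree_sub_le _ _).trans ?_
    simp only [natDegree_X_pow]
    refine max_le ?_ (by gcongr <;> norm_num)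
    refine (natDegree_C_mul_le _ _).trans ?_
    refine (natDegree_pow _ _).le.trans ?_
    calc 2 * (Spoly m k).natDegree ≤ 2 * 2 ^ (k+1) := by gcongr
    _ = 2 ^ (k+2) := by ring

lemma Spoly_eval_zero (m : ℝ) (k : ℕ) :
    (Spoly m k).eval 0 = (((1:ℝ)/2) * (2/(m+1)) ^ (2^k) : ℝ) := by
  induction k with
  | zero => simp [Spoly, div_eq_mul_inv]
  | succ k ih =>
    unfold Spoly
    simp only [eval_sub, eval_mul, eval_pow, eval_C, eval_X, ih]
    rw [zero_pow (by positivity)]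
    push_cast
    ring

lemma Spoly_eval_arc (m : ℝ) (hm : 1/2 ≤ m) (z : ℂ) (hz : ‖z‖ = 1) (hre : z.re ≤ m)
    (k : ℕ) : ∃ τ : ℝ, |τ| ≤ 1 ∧ (Spoly m k).eval z = z ^ (2^k) * τ := by
  have hm1 : (0:ℝ) < m + 1 := by linarith
  have hrabs : |z.re| ≤ 1 := by
    have := Complex.abs_re_le_norm z
    rwa [hz] at this
  induction k with
  | zero =>
    refine ⟨(2*z.re - m + 1)/(m+1), ?_, ?_⟩
    · have hnum : |2*z.re - m + 1| ≤ m + 1 := by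
        rw [abs_le]; constructor <;> nlinarith [abs_le.mp hrabs]
      rw [abs_div, abs_of_pos hm1]
      exact div_le_one_of_le₀ hnum hm1.le
    · have hkey : z^2 + 1 = 2*z.re*z := by
        have hc : z * (starRingEnd ℂ) z = 1 := by
          rw [Complex.mul_conj]
          norm_cast
          rw [← Complex.sq_norm, hz]; norm_num
        have ha : z + (starRingEnd ℂ) z = 2*z.re := by
          rw [Complex.add_conj]; push_cast; ring
        calc z^2 + 1 = z * (z + (starRingEnd ℂ) z) := by rw [mul_add, hc]; ring
        _ = 2*z.re*z := by rw [ha]; ring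
      have hne : ((m:ℂ) + 1) ≠ 0 := by
        have : ((m+1:ℝ):ℂ) ≠ 0 := Complex.ofReal_ne_zero.mpr (ne_of_gt hm1)
        push_cast at this; exact this
      simp only [Spoly, eval_mul, eval_add, eval_sub, eval_pow, eval_C, eval_X, eval_one,
        pow_zero, pow_one]
      push_cast
      field_simp
      linear_combination hkey
  | succ k ih =>
    obtain ⟨τ, hτ, heq⟩ := ih
    refine ⟨2*τ^2 - 1, ?_, ?_⟩
    · rw [abs_le]; constructor <;> nlinarith [abs_le.mp hτ, sq_nonneg τ]
    · have h2 : (2:ℕ)^(k+1) = 2^k * 2 := pow_succ 2 k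
      simp only [Spoly, eval_sub, eval_mul, eval_pow, eval_C, eval_X, heq, h2, pow_mul]
      push_cast
      ring

set_option maxHeartbeats 1000000 in
/-- If `ρ` is a finite positive measure on the unit circle whose
closed support is not all of `𝕋` (i.e. some ball centered on the circle is
`ρ`-null), then `e_n(ρ) ≤ C e^{-cn}` for all `n ≥ 1`, for some `C, c > 0`. -/
theorem stmt2 (ρ : Measure ℂ) [IsFiniteMeasure ρ]
    (hcirc : ρ {z : ℂ | ‖z‖ ≠ 1} = 0)
    (hgap : ∃ t : ℂ, ‖t‖ = 1 ∧ ∃ ε > 0, ρ (Metric.ball t ε) = 0) :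
    ∃ C > 0, ∃ c > 0, ∀ n : ℕ, 1 ≤ n →
      eN ρ n ≤ C * Real.exp (-c * n) := by
  obtain ⟨t, ht, ε, hεpos, hnull⟩ := hgap
  obtain ⟨ε', hε'def⟩ : ∃ x : ℝ, x = min ε 1 := ⟨_, rfl⟩
  have hε'pos : 0 < ε' := hε'def ▸ lt_min hεpos one_pos
  have hε'le : ε' ≤ 1 := hε'def ▸ min_le_right ε 1
  have hnull' : ρ (Metric.ball t ε') = 0 :=
    measure_mono_null (Metric.ball_subset_ball (hε'def ▸ min_le_left ε 1)) hnull
  obtain ⟨m, hmdef⟩ : ∃ x : ℝ, x = 1 - ε'^2/2 := ⟨_, rfl⟩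
  have hm : 1/2 ≤ m := by rw [hmdef]; nlinarith
  have hmlt : m < 1 := by rw [hmdef]; nlinarith
  have hm1 : (0:ℝ) < m + 1 := by linarith
  have hq : 1 < 2/(m+1) := by rw [lt_div_iff₀ hm1]; linarith
  obtain ⟨N, hN⟩ : ∃ N : ℕ, (4:ℝ) < (2/(m+1)) ^ N := pow_unbounded_of_one_lt 4 hq
  obtain ⟨b, hbdef⟩ : ∃ x : ℝ, x = (1/2) * (2/(m+1)) ^ (2^N) := ⟨_, rfl⟩
  have hb2 : 2 < b := by
    rw [hbdef]
    have h1 : (2/(m+1)) ^ N ≤ (2/(m+1)) ^ (2^N) :=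
      pow_le_pow_right₀ hq.le (Nat.le_of_lt (Nat.lt_two_pow_self))
    nlinarith
  have hbpos : 0 < b := by linarith
  obtain ⟨D, hDdef⟩ : ∃ x : ℕ, x = 2 ^ (N+1) := ⟨_, rfl⟩
  have hDpos : 0 < D := by rw [hDdef]; positivity
  have hDR : (0:ℝ) < (D:ℝ) := by exact_mod_cast hDpos
  have hlogb : 0 < Real.log b := Real.log_pos (by linarith)
  obtain ⟨c, hcdef⟩ : ∃ x : ℝ, x = Real.log b / D := ⟨_, rfl⟩
  have hcpos : 0 < c := hcdef ▸ div_pos hlogb hDR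
  obtain ⟨ρb, hρdef⟩ : ∃ x : ℝ, x = (ρ Set.univ).toReal := ⟨_, rfl⟩
  have hρb : 0 ≤ ρb := hρdef ▸ ENNReal.toReal_nonneg
  refine ⟨b * (Real.sqrt ρb + 1), by nlinarith [Real.sqrt_nonneg ρb], c, hcpos, ?_⟩
  intro n hn
  obtain ⟨f, hfdef⟩ : ∃ g : Polynomial ℂ, g = Spoly m N := ⟨_, rfl⟩
  have hf0 : f.eval 0 = (b:ℂ) := by
    rw [hfdef, Spoly_eval_zero, hbdef]
  have hbne : (b:ℂ) ≠ 0 := by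
    exact_mod_cast Complex.ofReal_ne_zero.mpr (ne_of_gt hbpos)
  obtain ⟨j, hjdef⟩ : ∃ x : ℕ, x = n / D := ⟨_, rfl⟩
  obtain ⟨P, hPdef⟩ : ∃ p : Polynomial ℂ,
    p = Polynomial.C ((b:ℝ):ℂ)⁻¹ * f.comp (Polynomial.C ((starRingEnd ℂ) t) * Polynomial.X) :=
    ⟨_, rfl⟩
  obtain ⟨Q, hQdef⟩ : ∃ p : Polynomial ℂ, p = 1 - P ^ j := ⟨_, rfl⟩
  have hQ0 : Q.eval 0 = 0 := by
    simp [hQdef, hPdef, eval_comp, hf0, inv_mul_cancel₀ hbne]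
  have hQdeg : Q.natDegree ≤ n := by
    rw [hQdef]
    refine (natDegree_sub_le _ _).trans ?_
    rw [natDegree_one]
    refine max_le (Nat.zero_le _) ?_
    refine (natDegree_pow_le).trans ?_
    have hP : P.natDegree ≤ D := by
      rw [hPdef]
      refine (natDegree_C_mul_le _ _).trans ?_
      refine (natDegree_comp_le).trans ?_
      have h1 : (Polynomial.C ((starRingEnd ℂ) t) * Polynomial.X).natDegree ≤ 1 :=
        (natDegree_C_mul_le _ _).trans natDegree_X.le
      calc f.natDegree * (Polynomial.C ((starRingEnd ℂ) t) * Polynomial.X).natDegree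
          ≤ f.natDegree * 1 := by gcongr
      _ = f.natDegree := mul_one _
      _ ≤ D := by rw [hfdef, hDdef]; exact Spoly_natDegree_le m N
    calc j * P.natDegree ≤ j * D := by gcongr
    _ ≤ n := by rw [hjdef]; exact Nat.div_mul_le_self n D
  -- pointwise bound on the support
  have hpt : ∀ z : ℂ, ‖z‖ = 1 → z ∉ Metric.ball t ε' → ‖(1:ℂ) - Q.eval z‖ ≤ (b⁻¹)^j := by
    intro z hz hzball
    obtain ⟨u, hudef⟩ : ∃ w : ℂ, w = (starRingEnd ℂ) t * z := ⟨_, rfl⟩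
    have hu1 : ‖u‖ = 1 := by
      rw [hudef, norm_mul, RCLike.norm_conj, ht, hz, one_mul]
    have htt : (starRingEnd ℂ) t * t = 1 := by
      rw [mul_comm, Complex.mul_conj]
      norm_cast
      rw [← Complex.sq_norm, ht]; norm_num
    have hdist : ε' ≤ ‖u - 1‖ := by
      have h1 : u - 1 = (starRingEnd ℂ) t * (z - t) := by
        rw [hudef, mul_sub, htt]
      rw [h1, norm_mul, RCLike.norm_conj, ht, one_mul]
      have h2 : ¬ dist z t < ε' := by
        intro h; exact hzball (Metric.mem_ball.mpr h)
      rw [dist_eq_norm] at h2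
      linarith [not_lt.mp h2]
    have hre : u.re ≤ m := by
      have e1 : u.re^2 + u.im^2 = 1 := by
        have h := Complex.sq_norm u
        rw [Complex.normSq_apply, hu1] at h
        nlinarith
      have e2 : (u.re - 1)^2 + u.im^2 = ‖u-1‖^2 := by
        have h := Complex.sq_norm (u-1)
        rw [Complex.normSq_apply] at h
        simp only [Complex.sub_re, Complex.sub_im, Complex.one_re, Complex.one_im,
          sub_zero] at h
        rw [h]; ring
      have e3 : ε'^2 ≤ ‖u-1‖^2 := pow_le_pow_left₀ hε'pos.le hdist 2
      have e5 : 2 - 2*u.re = ‖u-1‖^2 := by linear_combination e2 - e1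
      rw [hmdef]; linarith
    obtain ⟨τ, hτ, heq⟩ := Spoly_eval_arc m hm u hu1 hre N
    have hfu : ‖f.eval u‖ ≤ 1 := by
      rw [hfdef, heq, norm_mul, norm_pow, hu1, one_pow, one_mul, Complex.norm_real,
        Real.norm_eq_abs]
      exact hτ
    have h1Q : (1:ℂ) - Q.eval z = (P.eval z)^j := by
      rw [hQdef]; simp
    rw [h1Q, norm_pow]
    have hPz : ‖P.eval z‖ ≤ b⁻¹ := by
      rw [hPdef]
      simp only [eval_mul, eval_C, eval_comp, eval_X]
      rw [norm_mul, norm_inv, Complex.norm_real, Real.norm_eq_abs, abs_of_pos hbpos]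
      calc b⁻¹ * ‖f.eval ((starRingEnd ℂ) t * z)‖ ≤ b⁻¹ * 1 := by
            rw [← hudef]; gcongr
      _ = b⁻¹ := mul_one _
    exact pow_le_pow_left₀ (norm_nonneg _) hPz j
  -- a.e. bound and integral estimate
  have hae : ∀ᵐ z ∂ρ, ‖(1:ℂ) - Q.eval z‖ ≤ (b⁻¹)^j := by
    have hU : ρ ({z : ℂ | ‖z‖ ≠ 1} ∪ Metric.ball t ε') = 0 := measure_union_null hcirc hnull'
    rw [ae_iff]
    refine measure_mono_null ?_ hU
    intro z hz
    simp only [Set.mem_setOf_eq] at hz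
    by_contra hcon
    simp only [Set.mem_union, Set.mem_setOf_eq] at hcon
    push_neg at hcon
    exact hz (hpt z hcon.1 hcon.2)
  have hsq : ∀ᵐ z ∂ρ, ‖‖(1:ℂ) - Q.eval z‖^2‖ ≤ ((b⁻¹)^j)^2 := by
    filter_upwards [hae] with z hz
    rw [Real.norm_eq_abs, abs_of_nonneg (by positivity)]
    exact pow_le_pow_left₀ (norm_nonneg _) hz 2
  have hint : ∫ z, ‖(1:ℂ) - Q.eval z‖^2 ∂ρ ≤ ((b⁻¹)^j)^2 * ρb := by
    calc ∫ z, ‖(1:ℂ) - Q.eval z‖^2 ∂ρ ≤ |∫ z, ‖(1:ℂ) - Q.eval z‖^2 ∂ρ| := le_abs_self _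
    _ = ‖∫ z, ‖(1:ℂ) - Q.eval z‖^2 ∂ρ‖ := (Real.norm_eq_abs _).symm
    _ ≤ ((b⁻¹)^j)^2 * ρb := hρdef ▸ norm_integral_le_of_norm_le_const hsq
  have hIpos : 0 ≤ ∫ z, ‖(1:ℂ) - Q.eval z‖^2 ∂ρ :=
    integral_nonneg (fun z => by positivity)
  have h1 : eN ρ n ≤ (∫ z, ‖(1:ℂ) - Q.eval z‖^2 ∂ρ) ^ (1/2:ℝ) := by
    unfold eN
    refine csInf_le ⟨0, ?_⟩ ⟨Q, hQdeg, hQ0, rfl⟩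
    rintro r ⟨Q', _, _, rfl⟩
    exact Real.rpow_nonneg (integral_nonneg (fun z => by positivity)) _
  have h2 : (∫ z, ‖(1:ℂ) - Q.eval z‖^2 ∂ρ) ^ (1/2:ℝ) ≤ (((b⁻¹)^j)^2 * ρb) ^ (1/2:ℝ) :=
    Real.rpow_le_rpow hIpos hint (by norm_num)
  have h3 : (((b⁻¹)^j)^2 * ρb) ^ (1/2:ℝ) = (b⁻¹)^j * Real.sqrt ρb := by
    rw [← Real.sqrt_eq_rpow, Real.sqrt_mul (by positivity), Real.sqrt_sq (by positivity)]
  have hjb : (b⁻¹)^j ≤ b * Real.exp (-c * n) := by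
    have hexp : b⁻¹ = Real.exp (-Real.log b) := by
      rw [Real.exp_neg, Real.exp_log hbpos]
    rw [hexp, ← Real.exp_nat_mul]
    nth_rewrite 2 [← Real.exp_log hbpos]
    rw [← Real.exp_add]
    apply Real.exp_le_exp.mpr
    have hnD : (n:ℝ) < ((j:ℝ)+1) * D := by
      rw [hjdef]; exact_mod_cast (Nat.lt_div_mul_add hDpos).trans_eq (by ring)
    have hcn : c * n ≤ ((j:ℝ)+1) * Real.log b := by
      rw [hcdef, div_mul_eq_mul_div, div_le_iff₀ hDR]
      calc Real.log b * n ≤ Real.log b * (((j:ℝ)+1)*D) := by gcongr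
      _ = ((j:ℝ)+1) * Real.log b * D := by ring
    linarith [hcn]
  calc eN ρ n ≤ (((b⁻¹)^j)^2 * ρb) ^ (1/2:ℝ) := h1.trans h2
  _ = (b⁻¹)^j * Real.sqrt ρb := h3
  _ ≤ (b * Real.exp (-c * n)) * Real.sqrt ρb :=
      mul_le_mul_of_nonneg_right hjb (Real.sqrt_nonneg _)
  _ ≤ b * (Real.sqrt ρb + 1) * Real.exp (-c * n) := by
      nlinarith [Real.sqrt_nonneg ρb, Real.exp_pos (-c * (n:ℝ)), hbpos]
end

section
/- Let ξ : ℤ → ℂ be a sequence attaining values in a finite set X, let δ_X be the minimal distance between distinct points of X, and let n ∈ ℕ and q₀,…,q_{n-1} ∈ ℂ be such that |ξ(m+n) + Σ_{k=0}^{n-1} q_k ξ(m+k)| < δ_X/2 for every m ∈ ℤ. Then the n-tuple (ξ(0),…,ξ(n-1)) uniquely determines ξ(n), and consequently the whole sequence (ξ(m))_{m ≥ 0} is determined by its first n values; moreover ξ restricted to ℕ is eventually periodic with period at most |X|^n. -/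
/-- δ-prediction determines the sequence: Let `ξ : ℤ → X ⊂ ℂ`
with `X` finite and `δ`-separated (`δ > 0`), and suppose
`|ξ(m+n) + Σ_{k<n} q_k ξ(m+k)| < δ/2` for all `m`. Then the values
`ξ(0),…,ξ(n-1)` determine `ξ(m)` for all `m ≥ 0` (any other sequence with the
same prediction property, values in `X`, and the same first `n` values agrees
with `ξ` on `m ≥ 0`), and `ξ` restricted to `ℕ` is eventually periodic with
period at most `|X|^n`. -/
theorem stmt3 (X : Finset ℂ) (δ : ℝ) (hδpos : 0 < δ)
    (hsep : ∀ z ∈ X, ∀ w ∈ X, z ≠ w → δ ≤ ‖z - w‖)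
    (n : ℕ) (q : Fin n → ℂ) (ξ : ℤ → ℂ) (hval : ∀ m, ξ m ∈ X)
    (hpred : ∀ m : ℤ,
      ‖ξ (m + n) + ∑ k : Fin n, q k * ξ (m + (k : ℤ))‖ < δ / 2) :
    (∀ ξ' : ℤ → ℂ, (∀ m, ξ' m ∈ X) →
      (∀ m : ℤ, ‖ξ' (m + n) + ∑ k : Fin n, q k * ξ' (m + (k : ℤ))‖ < δ / 2) →
      (∀ k : Fin n, ξ' (k : ℤ) = ξ (k : ℤ)) →
      ∀ m : ℤ, 0 ≤ m → ξ' m = ξ m) ∧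
    ∃ N : ℕ, 1 ≤ N ∧ N ≤ X.card ^ n ∧
      ∃ m₀ : ℕ, ∀ m : ℕ, m₀ ≤ m → ξ ((m : ℤ) + N) = ξ (m : ℤ) := by
  have key : ∀ a b : ℂ, a ∈ X → b ∈ X → ‖a - b‖ < δ → a = b := by
    intro a b ha hb h
    by_contra hne
    exact absurd h (not_lt.2 (hsep a ha b hb hne))
  have step : ∀ ξ₁ ξ₂ : ℤ → ℂ, (∀ m, ξ₁ m ∈ X) → (∀ m, ξ₂ m ∈ X) →
      (∀ m : ℤ, ‖ξ₁ (m + n) + ∑ k : Fin n, q k * ξ₁ (m + (k : ℤ))‖ < δ / 2) →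
      (∀ m : ℤ, ‖ξ₂ (m + n) + ∑ k : Fin n, q k * ξ₂ (m + (k : ℤ))‖ < δ / 2) →
      ∀ m : ℤ, (∀ k : Fin n, ξ₁ (m + (k : ℤ)) = ξ₂ (m + (k : ℤ))) →
      ξ₁ (m + n) = ξ₂ (m + n) := by
    intro ξ₁ ξ₂ h1 h2 p1 p2 m hw
    apply key _ _ (h1 _) (h2 _)
    have hsum : ∑ k : Fin n, q k * ξ₁ (m + (k : ℤ)) = ∑ k : Fin n, q k * ξ₂ (m + (k : ℤ)) :=
      Finset.sum_congr rfl fun k _ => by rw [hw k]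
    have heq : ξ₁ (m + n) - ξ₂ (m + n) =
        (ξ₁ (m + n) + ∑ k : Fin n, q k * ξ₁ (m + (k : ℤ)))
        - (ξ₂ (m + n) + ∑ k : Fin n, q k * ξ₂ (m + (k : ℤ))) := by
      rw [hsum]; ring
    rw [heq]
    calc ‖_ - _‖ ≤ _ + _ := norm_sub_le _ _
      _ < δ / 2 + δ / 2 := add_lt_add (p1 m) (p2 m)
      _ = δ := by ring
  -- prediction property for a shifted sequence
  have shift : ∀ c : ℤ,
      ∀ m : ℤ, ‖(fun t => ξ (t + c)) (m + n) +
        ∑ k : Fin n, q k * (fun t => ξ (t + c)) (m + (k : ℤ))‖ < δ / 2 := by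
    intro c m
    have e : (fun t => ξ (t + c)) (m + n) +
        ∑ k : Fin n, q k * (fun t => ξ (t + c)) (m + (k : ℤ))
        = ξ ((m + c) + n) + ∑ k : Fin n, q k * ξ ((m + c) + (k : ℤ)) := by
      simp only
      congr 1
      · congr 1; ring
      · exact Finset.sum_congr rfl fun k _ => by congr 2; ring
    rw [e]
    exact hpred (m + c)
  -- periodicity lemma: if windows at a and a+N agree, ξ is N-periodic from a on
  have periodic : ∀ a N : ℕ,
      (∀ k : Fin n, ξ ((a : ℤ) + (k : ℤ)) = ξ ((a : ℤ) + (N : ℤ) + (k : ℤ))) →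
      ∀ m : ℕ, a ≤ m → ξ ((m : ℤ) + N) = ξ (m : ℤ) := by
    intro a N hwin
    have hper : ∀ j : ℕ, ξ (((a + j : ℕ) : ℤ) + (N : ℤ)) = ξ ((a + j : ℕ) : ℤ) := by
      intro j
      induction j using Nat.strong_induction_on with
      | _ j ih =>
        by_cases hj : j < n
        · have e1 : ((a + j : ℕ) : ℤ) + (N : ℤ) = (a : ℤ) + (N : ℤ) + ((⟨j, hj⟩ : Fin n) : ℤ) := by
            push_cast; ring
          have e2 : ((a + j : ℕ) : ℤ) = (a : ℤ) + ((⟨j, hj⟩ : Fin n) : ℤ) := by push_cast; ring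
          rw [e1, e2]
          exact (hwin ⟨j, hj⟩).symm
        · push_neg at hj
          have hst := step (fun t => ξ (t + (N : ℤ))) ξ (fun m => hval _) hval
            (shift (N : ℤ)) hpred ((a + (j - n) : ℕ) : ℤ) ?_
          · have h1 : ((a + (j - n) : ℕ) : ℤ) + (n : ℤ) = ((a + j : ℕ) : ℤ) := by omega
            rwa [h1] at hst
          · intro k
            have e4 : ((a + (j - n) : ℕ) : ℤ) + (k : ℤ) = ((a + (j - n + k) : ℕ) : ℤ) := by
              push_cast; omega
            rw [e4]
            exact ih (j - n + k) (by omega)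
    intro m hm
    have := hper (m - a)
    have e : ((a + (m - a) : ℕ) : ℤ) = (m : ℤ) := by omega
    rwa [e] at this
  constructor
  · intro ξ' hval' hpred' h0 m hm
    obtain ⟨a, rfl⟩ := Int.eq_ofNat_of_zero_le hm
    induction a using Nat.strong_induction_on with
    | _ a ih =>
      by_cases ha : a < n
      · exact h0 ⟨a, ha⟩
      · push_neg at ha
        have h1 : ((a - n : ℕ) : ℤ) + n = (a : ℤ) := by omega
        have hst := step ξ' ξ hval' hval hpred' hpred ((a - n : ℕ) : ℤ) ?_
        · rwa [h1] at hst
        · intro k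
          have h2 : ((a - n : ℕ) : ℤ) + (k : ℤ) = ((a - n + k : ℕ) : ℤ) := by
            push_cast; ring
          rw [h2]
          exact ih (a - n + k) (by omega) (Int.natCast_nonneg _)
  · have hmap : ∀ m ∈ Finset.range (X.card ^ n + 1),
        (fun k : Fin n => ξ ((m : ℤ) + (k : ℤ))) ∈ Fintype.piFinset (fun _ : Fin n => X) := by
      intro m _
      rw [Fintype.mem_piFinset]
      intro k; exact hval _
    obtain ⟨a, ha, b, hb, hab, hfab⟩ :=
      Finset.exists_ne_map_eq_of_card_lt_of_maps_to
        (t := Fintype.piFinset (fun _ : Fin n => X))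
        (by rw [Fintype.card_piFinset]; simp [Finset.card_range]) hmap
    simp only [Finset.mem_range] at ha hb
    rcases lt_or_gt_of_ne hab with h | h
    · refine ⟨b - a, by omega, by omega, a, periodic a (b - a) ?_⟩
      intro k
      have e : (a : ℤ) + ((b - a : ℕ) : ℤ) + (k : ℤ) = (b : ℤ) + (k : ℤ) := by omega
      rw [e]
      exact congrFun hfab k
    · refine ⟨a - b, by omega, by omega, b, periodic b (a - b) ?_⟩
      intro k
      have e : (b : ℤ) + ((a - b : ℕ) : ℤ) + (k : ℤ) = (a : ℤ) + (k : ℤ) := by omega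
      rw [e]
      exact (congrFun hfab k).symm
end

section
/- For every n, the primitive n-th roots of unity include a point in any arc of 𝕋 of length greater than 2π·(gap), where the maximal gap between consecutive primitive n-th roots of unity tends to 0 as n → ∞; concretely: for every δ > 0 there is n₀ such that for all n ≥ n₀, every arc of 𝕋 of length δ contains a primitive n-th root of unity. -/
open Finset ArithmeticFunction
open scoped ArithmeticFunction ArithmeticFunction.Moebius Real

-- indicator via moebius
lemma ind_moebius (n k : ℕ) (hn : n ≠ 0) (hk : k ≠ 0) :
    ∑ d ∈ n.divisors, (if d ∣ k then ((μ d : ℤ) : ℝ) else 0)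
      = if Nat.Coprime k n then 1 else 0 := by
  rw [← Finset.sum_filter]
  have h1 : n.divisors.filter (· ∣ k) = (Nat.gcd k n).divisors := by
    ext d
    simp only [Finset.mem_filter, Nat.mem_divisors, Nat.dvd_gcd_iff]
    constructor
    · rintro ⟨⟨h1, _⟩, h2⟩
      exact ⟨⟨h2, h1⟩, Nat.gcd_ne_zero_right hn⟩
    · rintro ⟨⟨h1, h2⟩, _⟩
      exact ⟨⟨h2, hn⟩, h1⟩
  rw [h1]
  have h2 := congrArg (fun f : ArithmeticFunction ℤ => f (Nat.gcd k n)) moebius_mul_coe_zeta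
  simp only [coe_mul_zeta_apply, one_apply] at h2
  have : (∑ d ∈ (Nat.gcd k n).divisors, (μ d : ℤ)) = if Nat.gcd k n = 1 then 1 else 0 := h2
  calc ∑ d ∈ (Nat.gcd k n).divisors, ((μ d : ℤ) : ℝ)
      = ((∑ d ∈ (Nat.gcd k n).divisors, (μ d : ℤ) : ℤ) : ℝ) := by push_cast; ring
    _ = _ := by rw [this]; unfold Nat.Coprime; split <;> simp

lemma card_dvd_Ioc (d a b : ℕ) (hab : a ≤ b) :
    ((Finset.Ioc a b).filter (d ∣ ·)).card = b / d - a / d := by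
  have hu : Finset.Ioc 0 a ∪ Finset.Ioc a b = Finset.Ioc 0 b :=
    Finset.Ioc_union_Ioc_eq_Ioc (Nat.zero_le a) hab
  have hd : Disjoint (Finset.Ioc 0 a) (Finset.Ioc a b) := by
    rw [Finset.disjoint_left]
    intro x hx hx'
    simp only [Finset.mem_Ioc] at hx hx'
    omega
  have := congrArg (fun s => (s.filter (d ∣ ·)).card) hu
  simp only [Finset.filter_union] at this
  rw [Finset.card_union_of_disjoint (hd.mono (Finset.filter_subset _ _) (Finset.filter_subset _ _))] at this
  rw [Nat.Ioc_filter_dvd_card_eq_div, Nat.Ioc_filter_dvd_card_eq_div] at this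
  omega

-- totient identity
lemma totient_moebius_real (n : ℕ) (hn : 0 < n) :
    ((Nat.totient n : ℕ) : ℝ) = ∑ d ∈ n.divisors, ((μ d : ℤ) : ℝ) * ((n : ℝ) / d) := by
  have key : ∀ m : ℕ, 0 < m →
      (∑ x ∈ m.divisorsAntidiagonal, ((μ x.1 : ℤ) : ℝ) * (x.2 : ℝ)) = (Nat.totient m : ℝ) := by
    have := (sum_eq_iff_sum_mul_moebius_eq (R := ℝ)
      (f := fun m => (Nat.totient m : ℝ)) (g := fun m => (m : ℝ))).mp ?_
    · exact fun m hm => this m hm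
    · intro m hm
      rw [← Nat.cast_sum]
      norm_cast
      exact Nat.sum_totient m
  have h := key n hn
  rw [← h, Nat.sum_divisorsAntidiagonal (f := fun x y => ((μ x : ℤ) : ℝ) * (y : ℝ))]
  refine Finset.sum_congr rfl fun d hd => ?_
  obtain ⟨hdvd, hne⟩ := Nat.mem_divisors.mp hd
  have hd0 : d ≠ 0 := fun h => by simp [h] at hdvd; omega
  rw [Nat.cast_div hdvd (by exact_mod_cast hd0)]

lemma sqfree_divisors_card (n : ℕ) :
    (n.divisors.filter Squarefree).card ≤ 2 ^ n.primeFactors.card := by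
  rw [← Finset.card_powerset]
  apply Finset.card_le_card_of_injOn Nat.primeFactors
  · intro d hd
    simp only [Finset.coe_filter, Set.mem_setOf_eq, Nat.mem_divisors] at hd
    exact Finset.mem_powerset.mpr (Nat.primeFactors_mono hd.1.1 hd.1.2)
  · intro d1 h1 d2 h2 h
    simp only [Finset.coe_filter, Set.mem_setOf_eq, Nat.mem_divisors] at h1 h2
    rw [← Nat.prod_primeFactors_of_squarefree h1.2, ← Nat.prod_primeFactors_of_squarefree h2.2, h]

lemma totient_lb (n : ℕ) (hn : 0 < n) :
    n ≤ 2 ^ n.primeFactors.card * Nat.totient n := by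
  have key := Nat.totient_mul_prod_primeFactors n
  have hP : 0 < ∏ p ∈ n.primeFactors, p :=
    Finset.prod_pos fun p hp => (Nat.prime_of_mem_primeFactors hp).pos
  have h1 : ∏ p ∈ n.primeFactors, p ≤ ∏ p ∈ n.primeFactors, 2 * (p - 1) := by
    apply Finset.prod_le_prod' <;> try skip
    intro p hp
    have := (Nat.prime_of_mem_primeFactors hp).two_le
    omega
  have h2 : ∏ p ∈ n.primeFactors, 2 * (p - 1)
      = 2 ^ n.primeFactors.card * ∏ p ∈ n.primeFactors, (p - 1) := by
    rw [Finset.prod_mul_distrib, Finset.prod_const]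
  have : n * ∏ p ∈ n.primeFactors, p ≤ (2 ^ n.primeFactors.card * Nat.totient n) * ∏ p ∈ n.primeFactors, p := by
    calc n * ∏ p ∈ n.primeFactors, p ≤ n * ∏ p ∈ n.primeFactors, 2 * (p - 1) :=
          Nat.mul_le_mul_left n h1
      _ = 2 ^ n.primeFactors.card * (n * ∏ p ∈ n.primeFactors, (p - 1)) := by rw [h2]; ring
      _ = 2 ^ n.primeFactors.card * (Nat.totient n * ∏ p ∈ n.primeFactors, p) := by rw [key]
      _ = (2 ^ n.primeFactors.card * Nat.totient n) * ∏ p ∈ n.primeFactors, p := by ring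
  exact Nat.le_of_mul_le_mul_right this hP

lemma four_pow_omega_le (n : ℕ) (hn : 0 < n) :
    (4 : ℝ) ^ n.primeFactors.card ≤ 4096 * Real.sqrt n := by
  classical
  set S := n.primeFactors.filter (· < 16) with hS
  set B := n.primeFactors.filter (fun p => ¬ p < 16) with hB
  have hcard : S.card + B.card = n.primeFactors.card :=
    Finset.card_filter_add_card_filter_not _
  have hS6 : S.card ≤ 6 := by
    have hsub : S ⊆ (Finset.range 16).filter Nat.Prime := by
      intro p hp
      simp only [hS, Finset.mem_filter, Nat.mem_primeFactors] at hp
      simp only [Finset.mem_filter, Finset.mem_range]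
      exact ⟨hp.2, hp.1.1⟩
    calc S.card ≤ ((Finset.range 16).filter Nat.Prime).card := Finset.card_le_card hsub
      _ = 6 := by decide
  have h16 : 16 ^ B.card ≤ n := by
    calc 16 ^ B.card ≤ ∏ p ∈ B, p := by
          apply Finset.pow_card_le_prod
          intro p hp
          simp only [hB, Finset.mem_filter] at hp
          omega
      _ ≤ n := Nat.le_of_dvd hn
          ((Finset.prod_dvd_prod_of_subset _ _ _ (Finset.filter_subset _ _)).trans
            (Nat.prod_primeFactors_dvd n))
  have hsqrt : (4 : ℝ) ^ B.card ≤ Real.sqrt n := by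
    rw [show ((4:ℝ) ^ B.card) = Real.sqrt ((16:ℝ) ^ B.card) by
      rw [show ((16:ℝ) ^ B.card) = ((4:ℝ) ^ B.card) ^ 2 by
        rw [← pow_mul, pow_mul']; norm_num]
      exact (Real.sqrt_sq (by positivity)).symm]
    apply Real.sqrt_le_sqrt
    exact_mod_cast h16
  calc (4 : ℝ) ^ n.primeFactors.card = 4 ^ S.card * 4 ^ B.card := by
        rw [← pow_add, hcard]
    _ ≤ 4 ^ 6 * Real.sqrt n := by
        apply mul_le_mul _ hsqrt (by positivity) (by positivity)
        exact pow_le_pow_right₀ (by norm_num) hS6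
    _ = 4096 * Real.sqrt n := by norm_num

lemma key_count (n a b : ℕ) (hn : 0 < n) (hab : a ≤ b)
    (h : (4 : ℝ) ^ n.primeFactors.card < (b : ℝ) - (a : ℝ)) :
    ∃ k : ℕ, a < k ∧ k ≤ b ∧ Nat.Coprime k n := by
  classical
  set C := (Finset.Ioc a b).filter (fun k => Nat.Coprime k n) with hC
  have hcard : ((C.card : ℝ))
      = ∑ d ∈ n.divisors, ((μ d : ℤ) : ℝ) * ((b / d - a / d : ℕ) : ℝ) := by
    have e1 : ((C.card : ℝ)) = ∑ k ∈ Finset.Ioc a b, if Nat.Coprime k n then (1:ℝ) else 0 := by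
      rw [Finset.sum_boole, hC]
    rw [e1]
    have e2 : ∀ k ∈ Finset.Ioc a b, (if Nat.Coprime k n then (1:ℝ) else 0)
        = ∑ d ∈ n.divisors, (if d ∣ k then ((μ d : ℤ) : ℝ) else 0) := by
      intro k hk
      rw [ind_moebius n k hn.ne' (by simp only [Finset.mem_Ioc] at hk; omega)]
    rw [Finset.sum_congr rfl e2, Finset.sum_comm]
    refine Finset.sum_congr rfl fun d hd => ?_
    rw [← Finset.sum_filter, Finset.sum_const, nsmul_eq_mul, card_dvd_Ioc d a b hab, mul_comm]
  -- lower bound each term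
  have hterm : ∀ d ∈ n.divisors,
      ((μ d : ℤ) : ℝ) * (((b : ℝ) - a) / d) - |((μ d : ℤ) : ℝ)|
        ≤ ((μ d : ℤ) : ℝ) * ((b / d - a / d : ℕ) : ℝ) := by
    intro d hd
    obtain ⟨hdvd, hn0⟩ := Nat.mem_divisors.mp hd
    have hd0 : 0 < d := Nat.pos_of_dvd_of_pos hdvd hn
    have hdr : (0:ℝ) < d := by exact_mod_cast hd0
    set X : ℝ := ((b / d - a / d : ℕ) : ℝ) with hX
    set Y : ℝ := ((b : ℝ) - a) / d with hY
    have hXcast : X = ((b / d : ℕ) : ℝ) - ((a / d : ℕ) : ℝ) := by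
      rw [hX, Nat.cast_sub (Nat.div_le_div_right hab)]
    have bound : ∀ m : ℕ, (m:ℝ)/d - 1 < ((m / d : ℕ) : ℝ) ∧ ((m / d : ℕ) : ℝ) ≤ (m:ℝ)/d := by
      intro m
      have h1 := Nat.div_add_mod m d
      have h2 := Nat.mod_lt m hd0
      have h1' : (d:ℝ) * ((m/d : ℕ):ℝ) + ((m % d : ℕ):ℝ) = (m:ℝ) := by exact_mod_cast h1
      have h2' : ((m % d : ℕ):ℝ) < d := by exact_mod_cast h2
      have h3' : (0:ℝ) ≤ ((m % d : ℕ):ℝ) := Nat.cast_nonneg _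
      constructor
      · rw [div_sub_one hdr.ne', div_lt_iff₀ hdr, mul_comm]
        linarith
      · rw [le_div_iff₀ hdr, mul_comm]
        linarith
    have hXY : |X - Y| ≤ 1 := by
      rw [abs_le]
      obtain ⟨hb1, hb2⟩ := bound b
      obtain ⟨ha1, ha2⟩ := bound a
      rw [hXcast, hY]
      constructor
      · have : ((b:ℝ) - a)/d = (b:ℝ)/d - (a:ℝ)/d := by ring
        rw [this]; linarith
      · have : ((b:ℝ) - a)/d = (b:ℝ)/d - (a:ℝ)/d := by ring
        rw [this]; linarith
    have h3 : |((μ d : ℤ) : ℝ) * (X - Y)| ≤ |((μ d : ℤ) : ℝ)| := by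
      rw [abs_mul]
      exact mul_le_of_le_one_right (abs_nonneg _) hXY
    have h4 := neg_abs_le (((μ d : ℤ) : ℝ) * (X - Y))
    nlinarith [h3, h4]
  have hsum1 : ∑ d ∈ n.divisors, (((μ d : ℤ) : ℝ) * (((b : ℝ) - a) / d) - |((μ d : ℤ) : ℝ)|)
      ≤ (C.card : ℝ) := by
    rw [hcard]
    exact Finset.sum_le_sum hterm
  rw [Finset.sum_sub_distrib] at hsum1
  -- main term
  have hmain : ∑ d ∈ n.divisors, ((μ d : ℤ) : ℝ) * (((b : ℝ) - a) / d)
      = (((b : ℝ) - a) / n) * (Nat.totient n : ℝ) := by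
    rw [totient_moebius_real n hn, Finset.mul_sum]
    refine Finset.sum_congr rfl fun d hd => ?_
    obtain ⟨hdvd, hn0⟩ := Nat.mem_divisors.mp hd
    have hd0 : 0 < d := Nat.pos_of_dvd_of_pos hdvd hn
    have hdr : ((d:ℝ)) ≠ 0 := by positivity
    have hnr : ((n:ℝ)) ≠ 0 := by positivity
    field_simp
  -- error term
  have herr : ∑ d ∈ n.divisors, |((μ d : ℤ) : ℝ)| ≤ (2:ℝ) ^ n.primeFactors.card := by
    have step : ∑ d ∈ n.divisors, |((μ d : ℤ) : ℝ)|
        ≤ ∑ d ∈ n.divisors, (if Squarefree d then (1:ℝ) else 0) := by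
      refine Finset.sum_le_sum fun d hd => ?_
      by_cases hsq : Squarefree d
      · simp only [hsq, if_true]
        have := abs_moebius_le_one (n := d)
        exact_mod_cast this
      · simp [moebius_eq_zero_of_not_squarefree hsq, hsq]
    refine step.trans ?_
    rw [Finset.sum_boole]
    exact_mod_cast sqfree_divisors_card n
  -- combine
  have hw : (0:ℝ) < (2:ℝ) ^ n.primeFactors.card := by positivity
  have hnr : (0:ℝ) < (n:ℝ) := by exact_mod_cast hn
  have hlb : (n:ℝ) ≤ (2:ℝ) ^ n.primeFactors.card * (Nat.totient n : ℝ) := by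
    exact_mod_cast totient_lb n hn
  have h4eq : (4:ℝ) ^ n.primeFactors.card
      = (2:ℝ) ^ n.primeFactors.card * (2:ℝ) ^ n.primeFactors.card := by
    rw [← mul_pow]; norm_num
  have hba : (0:ℝ) ≤ (b:ℝ) - a := by
    have : (a:ℝ) ≤ b := by exact_mod_cast hab
    linarith
  have hphi : (0:ℝ) ≤ (Nat.totient n : ℝ) := Nat.cast_nonneg _
  have hpos : (0:ℝ) < (C.card : ℝ) := by
    have step1 : ((b:ℝ) - a) / (2:ℝ) ^ n.primeFactors.card
        ≤ (((b : ℝ) - a) / n) * (Nat.totient n : ℝ) := by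
      rw [div_le_iff₀ hw, div_mul_eq_mul_div, div_mul_eq_mul_div, le_div_iff₀ hnr]
      nlinarith
    have step2 : (2:ℝ) ^ n.primeFactors.card
        < ((b:ℝ) - a) / (2:ℝ) ^ n.primeFactors.card := by
      rw [lt_div_iff₀ hw]
      nlinarith
    linarith [hsum1, hmain ▸ hsum1]
  have : C.Nonempty := Finset.card_pos.mp (by exact_mod_cast hpos)
  obtain ⟨k, hk⟩ := this
  simp only [hC, Finset.mem_filter, Finset.mem_Ioc] at hk
  exact ⟨k, hk.1.1, hk.1.2, hk.2⟩

/-- For every `δ > 0` there is `n₀` such that for all `n ≥ n₀`,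
every arc of the unit circle of length `δ` contains a primitive `n`-th root of
unity. -/
theorem stmt11 (δ : ℝ) (hδ : 0 < δ) :
    ∃ n₀ : ℕ, ∀ n : ℕ, n₀ ≤ n → ∀ a : ℝ,
      ∃ z : ℂ, IsPrimitiveRoot z n ∧
        z ∈ (fun θ : ℝ => Complex.exp ((θ : ℂ) * Complex.I)) '' Set.Icc a (a + δ) := by
  have hπ : (0:ℝ) < π := Real.pi_pos
  set s : ℝ := 2 * π * 4098 / δ with hs
  have hs0 : 0 ≤ s := by positivity
  refine ⟨⌈s ^ 2⌉₊ + 1, fun n hn a => ?_⟩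
  have hn0 : 0 < n := by omega
  have hnr : (0:ℝ) < n := by exact_mod_cast hn0
  have hns : s ^ 2 < (n:ℝ) := by
    have h1 : s ^ 2 ≤ (⌈s ^ 2⌉₊ : ℝ) := Nat.le_ceil _
    have h2 : ((⌈s ^ 2⌉₊ : ℕ) : ℝ) < n := by exact_mod_cast hn
    linarith
  have hsq : s < Real.sqrt n := (Real.lt_sqrt hs0).mpr hns
  have hsq1 : (1:ℝ) ≤ Real.sqrt n := by
    rw [show (1:ℝ) = Real.sqrt 1 by simp]
    exact Real.sqrt_le_sqrt (by exact_mod_cast hn0)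
  have hsqpos : 0 < Real.sqrt n := lt_of_lt_of_le one_pos hsq1
  -- interval endpoints
  set t₁ : ℝ := a * n / (2 * π) with ht₁
  set t₂ : ℝ := (a + δ) * n / (2 * π) with ht₂
  set A : ℤ := ⌈t₁⌉ with hA
  set B : ℤ := ⌊t₂⌋ with hB
  have hlen : t₂ - t₁ = δ * n / (2 * π) := by rw [ht₁, ht₂]; ring
  have hδn : 4098 * Real.sqrt n < δ * n / (2 * π) := by
    have hkey : s * δ = 2 * π * 4098 := by rw [hs]; field_simp
    have hss : (Real.sqrt n) * (Real.sqrt n) = (n:ℝ) := Real.mul_self_sqrt hnr.le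
    rw [lt_div_iff₀ (by positivity)]
    nlinarith [mul_lt_mul_of_pos_right hsq (mul_pos hδ hsqpos)]
  have hAB : (4:ℝ) ^ n.primeFactors.card < (B:ℝ) - (A:ℝ) := by
    have h1 : (A:ℝ) < t₁ + 1 := Int.ceil_lt_add_one t₁
    have h2 : t₂ - 1 < (B:ℝ) := Int.sub_one_lt_floor t₂
    have h3 := four_pow_omega_le n hn0
    have h4 : 4096 * Real.sqrt n + 2 ≤ 4098 * Real.sqrt n := by nlinarith
    linarith
  have hABle : A ≤ B := by
    have h5 : (0:ℝ) < (4:ℝ) ^ n.primeFactors.card := by positivity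
    have : (A:ℝ) ≤ (B:ℝ) := by linarith
    exact_mod_cast this
  set m : ℕ := (B - A).toNat with hm
  have hmz : (m : ℤ) = B - A := Int.toNat_of_nonneg (by omega)
  have hmr : (m:ℝ) = (B:ℝ) - A := by
    have : ((m:ℤ):ℝ) = ((B - A : ℤ):ℝ) := by exact_mod_cast hmz
    push_cast at this
    linarith
  set sh : ℕ := A.natAbs with hsh
  set N : ℤ := A + sh * n with hN
  have hN0 : 0 ≤ N := by
    have habs : ((sh:ℤ)) = |A| := by rw [hsh]; exact (Int.abs_eq_natAbs A).symm
    have hn1 : (1:ℤ) ≤ n := by exact_mod_cast hn0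
    have h1 : (sh:ℤ) ≤ (sh:ℤ) * n := le_mul_of_one_le_right (by positivity) hn1
    have h2 : -|A| ≤ A := neg_abs_le A
    rw [hN]
    linarith [habs ▸ h1, habs ▸ h2]
  set a' : ℕ := N.toNat with ha'
  have ha'N : (a' : ℤ) = N := Int.toNat_of_nonneg hN0
  obtain ⟨k, hk1, hk2, hkcop⟩ := key_count n a' (a' + m) hn0 (Nat.le_add_right _ _)
    (by push_cast; linarith [hAB])
  -- K
  set K : ℤ := (k : ℤ) - sh * n with hK
  have hKA : A < K := by
    have : (a' : ℤ) < k := by exact_mod_cast hk1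
    omega
  have hKB : K ≤ B := by
    have : (k : ℤ) ≤ (a' : ℤ) + m := by exact_mod_cast hk2
    omega
  set θ : ℝ := 2 * π * K / n with hθ
  have haθ : a ≤ θ := by
    have h1 : t₁ ≤ (A:ℝ) := Int.le_ceil t₁
    have h2 : (A:ℝ) ≤ (K:ℝ) := by exact_mod_cast hKA.le
    have : t₁ ≤ (K:ℝ) := le_trans h1 h2
    rw [ht₁, div_le_iff₀ (by positivity)] at this
    rw [hθ, le_div_iff₀ hnr]
    linarith
  have hθδ : θ ≤ a + δ := by
    have h1 : (K:ℝ) ≤ (B:ℝ) := by exact_mod_cast hKB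
    have h2 : (B:ℝ) ≤ t₂ := Int.floor_le t₂
    have : (K:ℝ) ≤ t₂ := le_trans h1 h2
    rw [ht₂, le_div_iff₀ (by positivity)] at this
    rw [hθ, div_le_iff₀ hnr]
    linarith
  refine ⟨Complex.exp (2 * π * Complex.I * (k / n)),
    Complex.isPrimitiveRoot_exp_of_coprime k n hn0.ne' hkcop, θ, ⟨haθ, hθδ⟩, ?_⟩
  -- exp (θ I) = exp (2π I k/n)
  have hθc : (θ : ℂ) * Complex.I
      = 2 * π * Complex.I * (k / n) + (-(sh:ℤ)) * (2 * π * Complex.I) := by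
    have hnc : (n : ℂ) ≠ 0 := by exact_mod_cast hnr.ne'
    have hθ' : (θ : ℂ) = 2 * π * ((k:ℂ) - sh * n) / n := by
      rw [hθ, hK]
      push_cast
      ring
    rw [hθ']
    field_simp
    push_cast
    ring
  show Complex.exp ((θ:ℂ) * Complex.I) = _
  rw [hθc, Complex.exp_add]
  have hone : Complex.exp (-((sh:ℕ):ℂ) * (2 * (π:ℂ) * Complex.I)) = 1 := by
    have := Complex.exp_int_mul_two_pi_mul_I (-(sh:ℤ))
    push_cast at this
    exact this
  rw [show (-((↑(sh:ℤ)):ℂ)) = (-((sh:ℕ):ℂ)) by push_cast; ring] at *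
  rw [hone, mul_one]
end
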